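/- arXiv:1509.07980 — 9 statements merged into one kernel-verified Lean document; each statement's English description precedes it below -/
import Mathlib

section
/- Let A be a commutative integral residuated lattice, let a, b, z ∈ A and let m, n ≥ 1 be natural numbers. If a^m ≤ z and b^n ≤ z, then (a ∨ b)^(m+n−1) ≤ z. -/
/-- A commutative integral residuated lattice. -/
class CIRL (α : Type*) extends CommMonoid α, Lattice α, HImp α where
  residuation : ∀ x y z : α, x * y ≤ z ↔ y ≤ x ⇨ z
  le_one : ∀ x : α, x ≤ 1

namespace CIRLaux

variable {α : Type*} [CIRL α]

lemma mul_le_mul_left'' (x : α) {y z : α} (h : y ≤ z) : x * y ≤ x * z := by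
  rw [CIRL.residuation]
  exact h.trans ((CIRL.residuation x z (x * z)).mp le_rfl)

lemma mul_le_left' (x y : α) : x * y ≤ x := by
  calc x * y ≤ x * 1 := mul_le_mul_left'' x (CIRL.le_one y)
  _ = x := mul_one x

lemma mul_le_right' (x y : α) : x * y ≤ y := by
  rw [mul_comm]; exact mul_le_left' y x

lemma mul_sup' (x y z : α) : x * (y ⊔ z) = x * y ⊔ x * z := by
  apply le_antisymm
  · rw [CIRL.residuation]
    exact sup_le ((CIRL.residuation _ _ _).mp le_sup_left)
      ((CIRL.residuation _ _ _).mp le_sup_right)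
  · exact sup_le (mul_le_mul_left'' x le_sup_left) (mul_le_mul_left'' x le_sup_right)

lemma key (a b : α) : ∀ k, ∀ z : α, (∀ i ≤ k, a ^ i * b ^ (k - i) ≤ z) → (a ⊔ b) ^ k ≤ z := by
  intro k
  induction k with
  | zero => intro z h; simpa using h 0 le_rfl
  | succ k ih =>
    intro z h
    rw [pow_succ, mul_sup']
    apply sup_le
    · rw [mul_comm, CIRL.residuation]
      apply ih
      intro i hi
      rw [← CIRL.residuation]
      have := h (i + 1) (by omega)
      have e : a * (a ^ i * b ^ (k - i)) = a ^ (i + 1) * b ^ (k + 1 - (i + 1)) := by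
        rw [pow_succ', Nat.succ_sub_succ, mul_assoc]
      rwa [e]
    · rw [mul_comm, CIRL.residuation]
      apply ih
      intro i hi
      rw [← CIRL.residuation]
      have := h i (by omega)
      have e : b * (a ^ i * b ^ (k - i)) = a ^ i * b ^ (k + 1 - i) := by
        have : k + 1 - i = (k - i) + 1 := by omega
        rw [this, pow_succ']
        rw [mul_comm b, mul_assoc, mul_comm _ b]
      rwa [e]

end CIRLaux

theorem stmt1 {α : Type*} [CIRL α] (a b z : α) (m n : ℕ) (hm : 1 ≤ m) (hn : 1 ≤ n)
    (ha : a ^ m ≤ z) (hb : b ^ n ≤ z) : (a ⊔ b) ^ (m + n - 1) ≤ z := by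
  apply CIRLaux.key
  intro i hi
  by_cases hmi : m ≤ i
  · calc a ^ i * b ^ (m + n - 1 - i) ≤ a ^ i := CIRLaux.mul_le_left' _ _
      _ = a ^ m * a ^ (i - m) := by rw [← pow_add]; congr 1; omega
      _ ≤ a ^ m := CIRLaux.mul_le_left' _ _
      _ ≤ z := ha
  · have hj : n ≤ m + n - 1 - i := by omega
    calc a ^ i * b ^ (m + n - 1 - i) ≤ b ^ (m + n - 1 - i) := CIRLaux.mul_le_right' _ _
      _ = b ^ n * b ^ (m + n - 1 - i - n) := by rw [← pow_add]; congr 1; omega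
      _ ≤ b ^ n := CIRLaux.mul_le_left' _ _
      _ ≤ z := hb
end

section
/- Let k ≥ 1 and let A be a k-potent commutative integral residuated lattice. The following are equivalent: (i) there exists a ∈ A with a ≠ 1 such that b^k ≤ a for every b ∈ A with b ≠ 1; (ii) the element 1 is completely join irreducible in A; (iii) A has a second-greatest element. (Condition (i) is the standard criterion for subdirect irreducibility of commutative integral residuated lattices.) -/
section Aux

variable {α : Type*} [CIRL α]

lemma cirl_le_one (x : α) : x ≤ 1 := CIRL.le_one x

lemma cirl_mul_le_mul_left (z : α) {x y : α} (h : x ≤ y) : z * x ≤ z * y := by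
  rw [CIRL.residuation]
  exact le_trans h ((CIRL.residuation z y (z * y)).mp le_rfl)

lemma cirl_mul_le_left (x y : α) : x * y ≤ x := by
  calc x * y ≤ x * 1 := cirl_mul_le_mul_left x (cirl_le_one y)
  _ = x := mul_one x

lemma cirl_mul_le_right (x y : α) : x * y ≤ y := by
  rw [mul_comm]; exact cirl_mul_le_left y x

lemma cirl_mul_le_mul {a b c d : α} (h1 : a ≤ b) (h2 : c ≤ d) : a * c ≤ b * d :=
  le_trans (cirl_mul_le_mul_left a h2)
    (by rw [mul_comm a d, mul_comm b d]; exact cirl_mul_le_mul_left d h1)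

lemma cirl_mul_sup (x y z : α) : x * (y ⊔ z) = x * y ⊔ x * z := by
  apply le_antisymm
  · rw [CIRL.residuation]
    apply sup_le
    · rw [← CIRL.residuation]; exact le_sup_left
    · rw [← CIRL.residuation]; exact le_sup_right
  · exact sup_le (cirl_mul_le_mul_left x le_sup_left) (cirl_mul_le_mul_left x le_sup_right)

lemma cirl_sup_pow (b c : α) : ∀ m n : ℕ, (b ⊔ c) ^ (m + n) ≤ b ^ m ⊔ c ^ n := by
  intro m
  induction m with
  | zero =>
      intro n
      simpa using le_trans (cirl_le_one _) le_sup_left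
  | succ m ih =>
      intro n
      induction n with
      | zero =>
          simpa using le_trans (cirl_le_one _) le_sup_right
      | succ n ihn =>
          have h1 : (b ⊔ c) ^ (m + (n + 1)) * b ≤ b ^ (m + 1) ⊔ c ^ (n + 1) := by
            calc (b ⊔ c) ^ (m + (n + 1)) * b ≤ (b ^ m ⊔ c ^ (n + 1)) * b :=
                  cirl_mul_le_mul (ih (n + 1)) le_rfl
              _ = b * (b ^ m ⊔ c ^ (n + 1)) := mul_comm _ _
              _ = b * b ^ m ⊔ b * c ^ (n + 1) := cirl_mul_sup _ _ _
              _ ≤ b ^ (m + 1) ⊔ c ^ (n + 1) := by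
                  apply sup_le
                  · rw [mul_comm, ← pow_succ]; exact le_sup_left
                  · exact le_trans (cirl_mul_le_right _ _) le_sup_right
          have h2 : (b ⊔ c) ^ (m + 1 + n) * c ≤ b ^ (m + 1) ⊔ c ^ (n + 1) := by
            calc (b ⊔ c) ^ (m + 1 + n) * c ≤ (b ^ (m + 1) ⊔ c ^ n) * c :=
                  cirl_mul_le_mul ihn le_rfl
              _ = c * (b ^ (m + 1) ⊔ c ^ n) := mul_comm _ _
              _ = c * b ^ (m + 1) ⊔ c * c ^ n := cirl_mul_sup _ _ _
              _ ≤ b ^ (m + 1) ⊔ c ^ (n + 1) := by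
                  apply sup_le
                  · exact le_trans (cirl_mul_le_right _ _) le_sup_left
                  · rw [mul_comm, ← pow_succ]; exact le_sup_right
          have hsplit : (b ⊔ c) ^ (m + 1 + (n + 1))
              = (b ⊔ c) ^ (m + 1 + n) * (b ⊔ c) := pow_succ _ _
          rw [hsplit, cirl_mul_sup]
          apply sup_le
          · have : m + 1 + n = m + (n + 1) := by omega
            rw [this]; exact h1
          · exact h2

lemma cirl_list_join (J : ∀ b c : α, b ≠ 1 → c ≠ 1 → b ⊔ c ≠ 1) :
    ∀ l : List α, l ≠ [] → (∀ x ∈ l, x ≠ 1) → ∃ m : α, m ≠ 1 ∧ ∀ x ∈ l, x ≤ m := by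
  intro l
  induction l with
  | nil => intro h; exact absurd rfl h
  | cons x t ih =>
      intro _ hne
      by_cases ht : t = []
      · subst ht
        refine ⟨x, hne x (by simp), ?_⟩
        intro y hy
        simp only [List.mem_singleton] at hy
        exact hy ▸ le_rfl
      · obtain ⟨m, hm, hle⟩ := ih ht (fun y hy => hne y (by simp [hy]))
        refine ⟨x ⊔ m, J x m (hne x (by simp)) hm, ?_⟩
        intro y hy
        rcases List.mem_cons.mp hy with h | h
        · exact h ▸ le_sup_left
        · exact le_trans (hle y h) le_sup_right

lemma cirl_prod_le_pow : ∀ (l : List α) (m : α), (∀ x ∈ l, x ≤ m) → l.prod ≤ m ^ l.length := by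
  intro l
  induction l with
  | nil => intro m _; simp
  | cons x t ih =>
      intro m h
      simp only [List.prod_cons, List.length_cons]
      calc x * t.prod ≤ m * m ^ t.length :=
            cirl_mul_le_mul (h x (by simp)) (ih m (fun y hy => h y (by simp [hy])))
        _ = m ^ (t.length + 1) := by rw [pow_succ, mul_comm]

lemma cirl_isLUB_prods {D : Set α} (hD : IsLUB D 1) :
    ∀ n : ℕ, IsLUB {p : α | ∃ l : List α, l.length = n ∧ (∀ x ∈ l, x ∈ D) ∧ l.prod = p} 1 := by
  intro n
  induction n with
  | zero =>
      constructor
      · intro p _; exact cirl_le_one p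
      · intro v hv
        exact hv ⟨[], rfl, by simp, by simp⟩
  | succ n ih =>
      constructor
      · intro p _; exact cirl_le_one p
      · intro v hv
        apply ih.2
        rintro p ⟨l, hlen, hmem, rfl⟩
        have h1 : (1 : α) ≤ l.prod ⇨ v := by
          apply hD.2
          intro d hd
          rw [← CIRL.residuation]
          have hel : d * l.prod ∈
              {p : α | ∃ l : List α, l.length = n + 1 ∧ (∀ x ∈ l, x ∈ D) ∧ l.prod = p} := by
            refine ⟨d :: l, by simp [hlen], ?_, by simp⟩
            intro x hx
            rcases List.mem_cons.mp hx with h | h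
            · exact h ▸ hd
            · exact hmem x h
          have := hv hel
          rwa [mul_comm] at this
        have := (CIRL.residuation l.prod 1 v).mpr h1
        rwa [mul_one] at this

end Aux

theorem stmt2 {α : Type*} [CIRL α] (k : ℕ) (hk : 1 ≤ k)
    (hpot : ∀ x : α, x ^ (k + 1) = x ^ k) :
    List.TFAE
      [∃ a : α, a ≠ 1 ∧ ∀ b : α, b ≠ 1 → b ^ k ≤ a,
       ∀ D : Set α, IsLUB D 1 → (1 : α) ∈ D,
       ∃ s : α, s ≠ 1 ∧ ∀ x : α, x ≠ 1 → x ≤ s] := by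
  tfae_have 1 → 2 := by
    rintro ⟨a, ha, hpow⟩ D hD
    by_contra hnD
    have hJ : ∀ b c : α, b ≠ 1 → c ≠ 1 → b ⊔ c ≠ 1 := by
      intro b c hb hc h
      have h1 : (b ⊔ c) ^ (k + k) ≤ a :=
        le_trans (cirl_sup_pow b c k k) (sup_le (hpow b hb) (hpow c hc))
      rw [h, one_pow] at h1
      exact ha (le_antisymm (cirl_le_one a) h1)
    have hub : a ∈ upperBounds
        {p : α | ∃ l : List α, l.length = k ∧ (∀ x ∈ l, x ∈ D) ∧ l.prod = p} := by
      rintro p ⟨l, hlen, hmem, rfl⟩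
      have hlne : l ≠ [] := by
        intro h; rw [h] at hlen; simp at hlen; omega
      have hne1 : ∀ x ∈ l, x ≠ 1 := by
        intro x hx hx1
        exact hnD (hx1 ▸ hmem x hx)
      obtain ⟨m, hm, hle⟩ := cirl_list_join hJ l hlne hne1
      calc l.prod ≤ m ^ l.length := cirl_prod_le_pow l m hle
        _ = m ^ k := by rw [hlen]
        _ ≤ a := hpow m hm
    have hkey : (1 : α) ≤ a := (cirl_isLUB_prods hD k).2 hub
    exact ha (le_antisymm (cirl_le_one a) hkey)
  tfae_have 2 → 3 := by
    intro h2
    by_contra h3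
    push_neg at h3
    have hlub : IsLUB {x : α | x ≠ 1} 1 := by
      constructor
      · intro x _; exact cirl_le_one x
      · intro v hv
        by_contra hv1
        have hvne : v ≠ 1 := by
          intro h; rw [h] at hv1; exact hv1 le_rfl
        obtain ⟨x, hx, hxv⟩ := h3 v hvne
        exact hxv (hv hx)
    exact (h2 _ hlub) rfl
  tfae_have 3 → 1 := by
    rintro ⟨s, hs, h⟩
    refine ⟨s, hs, fun b hb => ?_⟩
    obtain ⟨k', rfl⟩ : ∃ k', k = k' + 1 := ⟨k - 1, by omega⟩
    calc b ^ (k' + 1) = b ^ k' * b := pow_succ b k'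
      _ ≤ 1 * b := cirl_mul_le_mul (cirl_le_one _) le_rfl
      _ = b := one_mul b
      _ ≤ s := h b hb
  tfae_finish
end

section
/- Let k ≥ 1 and let B be a commutative k-potent i-semiring, i.e., (B, ·, 1) is a commutative monoid, (B, ∨) is a join-semilattice, x·(y ∨ z) = (x·y) ∨ (x·z) for all x, y, z, and x^(k+1) = x^k for all x. Then for every finite subset S of B with |S| = n, the smallest subset of B containing S ∪ {1} and closed under · and ∨ is finite and has at most 2^((k+1)^n) elements. -/
/-- A commutative i-semiring: a commutative monoid with a join-semilattice structure
such that multiplication distributes over binary joins. -/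
class ISemiring (β : Type*) extends CommMonoid β, SemilatticeSup β where
  mul_sup : ∀ x y z : β, x * (y ⊔ z) = (x * y) ⊔ (x * z)

/-- Inductive closure under the generators, `1`, multiplication and join. -/
inductive SClosure {β : Type*} [ISemiring β] (S : Set β) : β → Prop
  | of {x} : x ∈ S → SClosure S x
  | one : SClosure S 1
  | mul {x y} : SClosure S x → SClosure S y → SClosure S (x * y)
  | sup {x y} : SClosure S x → SClosure S y → SClosure S (x ⊔ y)

theorem stmt4 {β : Type*} [ISemiring β] (k : ℕ) (hk : 1 ≤ k)
    (hpot : ∀ x : β, x ^ (k + 1) = x ^ k) (S : Finset β) (n : ℕ) (hS : S.card = n) :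
    ∃ T : Set β,
      ((↑S : Set β) ⊆ T ∧ (1 : β) ∈ T ∧ (∀ x ∈ T, ∀ y ∈ T, x * y ∈ T) ∧
        (∀ x ∈ T, ∀ y ∈ T, x ⊔ y ∈ T)) ∧
      (∀ T' : Set β,
        ((↑S : Set β) ⊆ T' ∧ (1 : β) ∈ T' ∧ (∀ x ∈ T', ∀ y ∈ T', x * y ∈ T') ∧
          (∀ x ∈ T', ∀ y ∈ T', x ⊔ y ∈ T')) → T ⊆ T') ∧
      T.Finite ∧ T.ncard ≤ 2 ^ ((k + 1) ^ n) := by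
  classical
  -- exponents saturate at k
  have hpow_sat : ∀ (x : β) (d : ℕ), x ^ (k + d) = x ^ k := by
    intro x d
    induction d with
    | zero => rfl
    | succ d ih => rw [← add_assoc, pow_succ, ih, ← pow_succ, hpot]
  have hpow : ∀ (x : β) (m : ℕ), x ^ m = x ^ (min m k) := by
    intro x m
    rcases le_or_gt m k with h | h
    · rw [min_eq_left h]
    · rw [min_eq_right h.le]
      obtain ⟨d, rfl⟩ : ∃ d, m = k + d := ⟨m - k, by omega⟩
      exact hpow_sat x d
  -- the monomials
  set MonF : Finset β :=
    (Finset.univ : Finset (↥S → Fin (k + 1))).image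
      (fun e => ∏ s : ↥S, (s : β) ^ ((e s : ℕ))) with hMonF
  have hone : (1 : β) ∈ MonF := by
    refine Finset.mem_image.2 ⟨fun _ => ⟨0, by omega⟩, Finset.mem_univ _, ?_⟩
    simp
  have hgen : ∀ s ∈ S, s ∈ MonF := by
    intro s hs
    refine Finset.mem_image.2 ⟨fun t => if t = ⟨s, hs⟩ then ⟨1, by omega⟩ else ⟨0, by omega⟩,
      Finset.mem_univ _, ?_⟩
    rw [Fintype.prod_eq_single (⟨s, hs⟩ : ↥S)]
    · simp
    · intro j hj
      simp [hj]
  have hmulMon : ∀ x ∈ MonF, ∀ y ∈ MonF, x * y ∈ MonF := by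
    intro x hx y hy
    obtain ⟨e, -, rfl⟩ := Finset.mem_image.1 hx
    obtain ⟨f, -, rfl⟩ := Finset.mem_image.1 hy
    refine Finset.mem_image.2 ⟨fun s => ⟨min ((e s : ℕ) + (f s : ℕ)) k, by omega⟩,
      Finset.mem_univ _, ?_⟩
    rw [← Finset.prod_mul_distrib]
    refine Finset.prod_congr rfl fun s _ => ?_
    rw [← pow_add]
    exact (hpow _ _).symm
  -- the candidate superset: nonempty sups of monomials
  set MSet : Set β :=
    {x | ∃ A : Finset β, ∃ h : A.Nonempty, A ⊆ MonF ∧ x = A.sup' h id} with hMSet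
  have hmem_of_mon : ∀ x ∈ MonF, x ∈ MSet := by
    intro x hx
    exact ⟨{x}, ⟨x, Finset.mem_singleton_self x⟩, by simpa using hx, by simp⟩
  have hsupM : ∀ x ∈ MSet, ∀ y ∈ MSet, x ⊔ y ∈ MSet := by
    rintro x ⟨A, hA, hAs, rfl⟩ y ⟨B, hB, hBs, rfl⟩
    refine ⟨A ∪ B, hA.mono Finset.subset_union_left, Finset.union_subset hAs hBs, ?_⟩
    rw [Finset.sup'_union hA hB]
  have hmul_left : ∀ (x : β) (A : Finset β) (h : A.Nonempty),
      x * A.sup' h id = A.sup' h (fun a => x * a) := by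
    intro x A h
    exact Finset.comp_sup'_eq_sup'_comp h (fun a => x * a) (fun a b => ISemiring.mul_sup x a b)
  have hmulM : ∀ x ∈ MSet, ∀ y ∈ MSet, x * y ∈ MSet := by
    rintro x ⟨A, hA, hAs, rfl⟩ y ⟨B, hB, hBs, rfl⟩
    refine ⟨(A ×ˢ B).image (fun p => p.1 * p.2), ?_, ?_, ?_⟩
    · exact (hA.product hB).image _
    · intro z hz
      obtain ⟨⟨a, b⟩, hab, rfl⟩ := Finset.mem_image.1 hz
      obtain ⟨ha, hb⟩ := Finset.mem_product.1 hab
      exact hmulMon _ (hAs ha) _ (hBs hb)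
    · have h1 : A.sup' hA id * B.sup' hB id
          = A.sup' hA (fun a => B.sup' hB (fun b => a * b)) := by
        rw [mul_comm, hmul_left]
        exact Finset.sup'_congr hA rfl (fun a _ => by rw [mul_comm]; exact hmul_left a B hB)
      rw [h1, Finset.sup'_image, Finset.sup'_product_left]
      rfl
  -- the closure
  refine ⟨{x | SClosure (↑S : Set β) x}, ⟨fun x hx => SClosure.of hx, SClosure.one,
    fun x hx y hy => SClosure.mul hx hy, fun x hx y hy => SClosure.sup hx hy⟩, ?_, ?_, ?_⟩
  · rintro T' ⟨hT1, hT2, hT3, hT4⟩ x hx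
    induction hx with
    | of h => exact hT1 h
    | one => exact hT2
    | mul _ _ ih1 ih2 => exact hT3 _ ih1 _ ih2
    | sup _ _ ih1 ih2 => exact hT4 _ ih1 _ ih2
  all_goals {
    have hsub : {x | SClosure (↑S : Set β) x} ⊆ MSet := by
      intro x hx
      induction hx with
      | of h => exact hmem_of_mon _ (hgen _ h)
      | one => exact hmem_of_mon _ hone
      | mul _ _ ih1 ih2 => exact hmulM _ ih1 _ ih2
      | sup _ _ ih1 ih2 => exact hsupM _ ih1 _ ih2
    have hF : MSet ⊆ ↑(MonF.powerset.image
        (fun A => if h : A.Nonempty then A.sup' h id else 1)) := by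
      rintro x ⟨A, hA, hAs, rfl⟩
      refine Finset.mem_coe.2 (Finset.mem_image.2 ⟨A, Finset.mem_powerset.2 hAs, ?_⟩)
      rw [dif_pos hA]
    have hfin : MSet.Finite := Set.Finite.subset (Finset.finite_toSet _) hF
    have hcardMon : MonF.card ≤ (k + 1) ^ n := by
      calc MonF.card ≤ (Finset.univ : Finset (↥S → Fin (k + 1))).card :=
            Finset.card_image_le
        _ = (k + 1) ^ n := by
            simp [Fintype.card_fun, hS]
    first
    | exact hfin.subset hsub
    | · calc ({x | SClosure (↑S : Set β) x}).ncard ≤ MSet.ncard :=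
            Set.ncard_le_ncard hsub hfin
          _ ≤ (MonF.powerset.image
              (fun A => if h : A.Nonempty then A.sup' h id else 1)).card := by
              rw [← Set.ncard_coe_finset]
              exact Set.ncard_le_ncard hF (Finset.finite_toSet _)
          _ ≤ MonF.powerset.card := Finset.card_image_le
          _ = 2 ^ MonF.card := Finset.card_powerset _
          _ ≤ 2 ^ ((k + 1) ^ n) := Nat.pow_le_pow_right (by norm_num) hcardMon
  }
end

section
/- Let B be a bounded commutative integral residuated lattice with least element ⊥, and let A ⊆ B be a finite subset with ⊥ ∈ A and 1 ∈ A which is closed under · and ∨. Then for all a, b ∈ A the set {c ∈ A : a·c ≤ b} has a greatest element, denoted a →' b; it belongs to A and satisfies: (i) for all c ∈ A, a·c ≤ b if and only if c ≤ a →' b; (ii) a →' b ≤ a → b; and (iii) if a → b ∈ A then a →' b = a → b. -/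
private lemma cirl_mul_le_mul_s5 {β : Type*} [CIRL β] (a : β) {y z : β} (h : y ≤ z) :
    a * y ≤ a * z := by
  rw [CIRL.residuation]
  exact le_trans h ((CIRL.residuation a z (a * z)).mp le_rfl)

theorem stmt5 {β : Type*} [CIRL β] [OrderBot β] (A : Set β) (hfin : A.Finite)
    (hbot : (⊥ : β) ∈ A) (hone : (1 : β) ∈ A)
    (hmul : ∀ x ∈ A, ∀ y ∈ A, x * y ∈ A) (hsup : ∀ x ∈ A, ∀ y ∈ A, x ⊔ y ∈ A) :
    ∀ a ∈ A, ∀ b ∈ A, ∃ m : β,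
      IsGreatest {c : β | c ∈ A ∧ a * c ≤ b} m ∧
      (∀ c ∈ A, a * c ≤ b ↔ c ≤ m) ∧
      m ≤ a ⇨ b ∧
      ((a ⇨ b) ∈ A → m = a ⇨ b) := by
  intro a ha b hb
  set S : Set β := {c : β | c ∈ A ∧ a * c ≤ b} with hS
  have hSfin : S.Finite := hfin.subset (fun c hc => hc.1)
  have hbotS : (⊥ : β) ∈ S := by
    refine ⟨hbot, ?_⟩
    calc a * ⊥ ≤ a * (a ⇨ b) := cirl_mul_le_mul_s5 a bot_le
    _ ≤ b := (CIRL.residuation a (a ⇨ b) b).mpr le_rfl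
  have hSsup : ∀ x ∈ S, ∀ y ∈ S, x ⊔ y ∈ S := by
    rintro x ⟨hxA, hx⟩ y ⟨hyA, hy⟩
    refine ⟨hsup x hxA y hyA, ?_⟩
    rw [CIRL.residuation]
    exact sup_le ((CIRL.residuation a x b).mp hx) ((CIRL.residuation a y b).mp hy)
  obtain ⟨m, hmS, hmax⟩ := hSfin.exists_maximalFor id S ⟨⊥, hbotS⟩
  have hgreat : IsGreatest S m := by
    refine ⟨hmS, fun c hc => ?_⟩
    have := hmax (j := m ⊔ c) (hSsup m hmS c hc) (le_sup_left : m ≤ m ⊔ c)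
    simp only [id] at this
    calc c ≤ m ⊔ c := le_sup_right
    _ ≤ m := this
  have hmle : m ≤ a ⇨ b := (CIRL.residuation a m b).mp hgreat.1.2
  refine ⟨m, hgreat, ?_, hmle, ?_⟩
  · intro c hc
    constructor
    · intro h; exact hgreat.2 ⟨hc, h⟩
    · intro h
      exact le_trans (cirl_mul_le_mul_s5 a h) hgreat.1.2
  · intro hAimp
    refine le_antisymm hmle (hgreat.2 ⟨hAimp, (CIRL.residuation a (a ⇨ b) b).mpr le_rfl⟩)
end

section
/- Let k ≥ 1 and let A, B, C be finite k-potent commutative integral residuated lattices, with A nontrivial and well-connected (equivalently, subdirectly irreducible). Let f : B → C be a surjective map preserving ·, ∧, ∨, →, and 1, and let h : A → C be an injective map preserving ·, ∨, and 1. Then there exists an injective map g : A → B preserving ·, ∨, and 1 such that f ∘ g = h. -/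
section CIRLAux

variable {α : Type*} [CIRL α]

lemma cirl_mul_le_mul_s11 {x y z : α} (hyz : y ≤ z) : x * y ≤ x * z :=
  (CIRL.residuation x y (x * z)).mpr
    (hyz.trans ((CIRL.residuation x z (x * z)).mp le_rfl))

lemma cirl_himp_self (c : α) : c ⇨ c = 1 :=
  le_antisymm (CIRL.le_one _)
    ((CIRL.residuation c 1 c).mp (by rw [mul_one]))

end CIRLAux

theorem stmt11 {A B C : Type*} [CIRL A] [CIRL B] [CIRL C]
    [Finite A] [Finite B] [Finite C]
    (k : ℕ) (hk : 1 ≤ k)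
    (hpotA : ∀ x : A, x ^ (k + 1) = x ^ k)
    (hpotB : ∀ x : B, x ^ (k + 1) = x ^ k)
    (hpotC : ∀ x : C, x ^ (k + 1) = x ^ k)
    (hA : Nontrivial A) (hwc : ∀ x y : A, x ⊔ y = 1 → x = 1 ∨ y = 1)
    (f : B → C) (hfsurj : Function.Surjective f)
    (hfmul : ∀ a b : B, f (a * b) = f a * f b)
    (hfinf : ∀ a b : B, f (a ⊓ b) = f a ⊓ f b)
    (hfsup : ∀ a b : B, f (a ⊔ b) = f a ⊔ f b)
    (hfhimp : ∀ a b : B, f (a ⇨ b) = f a ⇨ f b)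
    (hfone : f 1 = 1)
    (h : A → C) (hinj : Function.Injective h)
    (hhmul : ∀ a b : A, h (a * b) = h a * h b)
    (hhsup : ∀ a b : A, h (a ⊔ b) = h a ⊔ h b)
    (hhone : h 1 = 1) :
    ∃ g : A → B, Function.Injective g ∧
      (∀ a b : A, g (a * b) = g a * g b) ∧
      (∀ a b : A, g (a ⊔ b) = g a ⊔ g b) ∧
      g 1 = 1 ∧ f ∘ g = h := by
  classical
  have := Fintype.ofFinite B
  -- bundle f as a monoid hom
  let F : B →* C := { toFun := f, map_one' := hfone, map_mul' := hfmul }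
  -- e : minimum of the fiber of 1
  set S : Finset B := Finset.univ.filter (fun x => f x = 1) with hS
  set e : B := ∏ x ∈ S, x with he
  have hfe : f e = 1 := by
    have h2 : ∏ x ∈ S, F x = 1 := by
      apply Finset.prod_eq_one
      intro x hx
      simpa [hS, F] using hx
    show F (∏ x ∈ S, x) = 1
    rw [map_prod F (fun x => x) S]
    exact h2
  have emin : ∀ x : B, f x = 1 → e ≤ x := by
    intro x hx
    have hm : x ∈ S := by simp [hS, hx]
    have hp := Finset.mul_prod_erase S (fun y => y) hm
    rw [he, ← hp]
    exact cirl_mul_le_left x _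
  have hee : e * e = e := by
    refine le_antisymm (cirl_mul_le_left e e) (emin _ ?_)
    rw [hfmul, hfe, mul_one]
  -- key lemma: e identifies fibers of f
  have hkey : ∀ x y : B, f x = f y → e * x = e * y := by
    have step : ∀ x y : B, f x = f y → e * x ≤ e * y := by
      intro x y hxy
      have h1 : f (x ⇨ y) = 1 := by rw [hfhimp, hxy, cirl_himp_self]
      have h2 : e ≤ x ⇨ y := emin _ h1
      have h3 : x * e ≤ y := (CIRL.residuation x e y).mpr h2
      have h4 : e * x ≤ y := by rwa [mul_comm] at h3
      have h5 : e * (e * x) ≤ e * y := cirl_mul_le_mul_s11 h4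
      rwa [← mul_assoc, hee] at h5
    intro x y hxy
    exact le_antisymm (step x y hxy) (step y x hxy.symm)
  -- section of f
  let s : C → B := Function.surjInv hfsurj
  have hs : ∀ c : C, f (s c) = c := Function.surjInv_eq hfsurj
  -- the lifting
  set g : A → B := fun a => if a = 1 then 1 else e * s (h a) with hg
  have hg1 : g 1 = 1 := by simp [hg]
  have hfg : ∀ a : A, f (g a) = h a := by
    intro a
    by_cases ha : a = 1
    · rw [ha, hg1, hfone, hhone]
    · simp only [hg, if_neg ha, hfmul, hfe, hs, one_mul]
  have hone_of : ∀ a : A, h a = 1 → a = 1 := fun a ha => hinj (ha.trans hhone.symm)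
  have hmul_ne : ∀ a b : A, a * b = 1 → a = 1 := by
    intro a b hab
    exact le_antisymm (CIRL.le_one a) (hab ▸ cirl_mul_le_left a b)
  refine ⟨g, ?_, ?_, ?_, hg1, funext hfg⟩
  · -- injectivity
    intro a b hab
    by_cases ha : a = 1 <;> by_cases hb : b = 1
    · rw [ha, hb]
    · exfalso
      rw [ha, hg1] at hab
      simp only [hg, if_neg hb] at hab
      have h1 : (1 : B) ≤ s (h b) := hab ▸ cirl_mul_le_right e (s (h b))
      have h2 : s (h b) = 1 := le_antisymm (CIRL.le_one _) h1
      have h3 : h b = 1 := by rw [← hs (h b), h2, hfone]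
      exact hb (hone_of b h3)
    · exfalso
      rw [hb, hg1] at hab
      simp only [hg, if_neg ha] at hab
      have h1 : (1 : B) ≤ s (h a) := hab ▸ cirl_mul_le_right e (s (h a))
      have h2 : s (h a) = 1 := le_antisymm (CIRL.le_one _) h1
      have h3 : h a = 1 := by rw [← hs (h a), h2, hfone]
      exact ha (hone_of a h3)
    · have : h a = h b := by rw [← hfg a, ← hfg b, hab]
      exact hinj this
  · -- multiplicativity
    intro a b
    by_cases ha : a = 1
    · rw [ha, one_mul, hg1, one_mul]
    by_cases hb : b = 1
    · rw [hb, mul_one, hg1, mul_one]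
    have hab : a * b ≠ 1 := fun hc => ha (hmul_ne a b hc)
    simp only [hg, if_neg ha, if_neg hb, if_neg hab]
    have h2 : f (s (h (a * b))) = f (s (h a) * s (h b)) := by
      rw [hs, hfmul, hs, hs, hhmul]
    rw [hkey _ _ h2, mul_mul_mul_comm, hee]
  · -- sup
    intro a b
    by_cases ha : a = 1
    · have h1 : a ⊔ b = 1 := by rw [ha]; exact sup_eq_left.mpr (CIRL.le_one b)
      rw [h1, hg1, ha, hg1]
      exact (sup_eq_left.mpr (CIRL.le_one (g b))).symm
    by_cases hb : b = 1
    · have h1 : a ⊔ b = 1 := by rw [hb]; exact sup_eq_right.mpr (CIRL.le_one a)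
      rw [h1, hg1, hb, hg1]
      exact (sup_eq_right.mpr (CIRL.le_one (g a))).symm
    have hab : a ⊔ b ≠ 1 := fun hc => (hwc a b hc).elim ha hb
    simp only [hg, if_neg ha, if_neg hb, if_neg hab]
    have h2 : f (s (h (a ⊔ b))) = f (s (h a) ⊔ s (h b)) := by
      rw [hs, hfsup, hs, hs, hhsup]
    rw [hkey _ _ h2, cirl_mul_sup]
end

section
/- Let k ≥ 1, let B be a k-potent commutative integral residuated lattice, and let g, x ∈ B be such that g^k ≰ x. Then there exist a k-potent commutative integral residuated lattice C having a second-greatest element and a surjective map q : B → C preserving ·, ∧, ∨, →, and 1 such that q(g) = 1 and q(x) ≠ 1. -/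
universe u

namespace CIRLthm

variable {B : Type u} [CIRL B]

lemma resid {x y z : B} : x * y ≤ z ↔ y ≤ x ⇨ z := CIRL.residuation x y z

lemma le_one' (x : B) : x ≤ 1 := CIRL.le_one x

lemma mul_le_mul_left'' (a : B) {b c : B} (h : b ≤ c) : a * b ≤ a * c :=
  resid.mpr (h.trans (resid.mp le_rfl))

lemma mul_le_mul_right'' {a b : B} (h : a ≤ b) (c : B) : a * c ≤ b * c := by
  rw [mul_comm a c, mul_comm b c]; exact mul_le_mul_left'' c h

lemma mul_le_mul'' {a b c d : B} (h1 : a ≤ b) (h2 : c ≤ d) : a * c ≤ b * d :=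
  (mul_le_mul_right'' h1 c).trans (mul_le_mul_left'' b h2)

lemma mul_le_left' (a b : B) : a * b ≤ a := by
  have : a * b ≤ a * 1 := mul_le_mul_left'' a (le_one' b)
  simpa using this

lemma mul_le_right' (a b : B) : a * b ≤ b := by
  rw [mul_comm]; exact mul_le_left' b a

lemma mul_himp_le' (a b : B) : a * (a ⇨ b) ≤ b := resid.mpr le_rfl

lemma one_le_himp_iff {a b : B} : 1 ≤ a ⇨ b ↔ a ≤ b := by
  rw [← resid, mul_one]

lemma himp_le_himp' {a a' b b' : B} (ha : a' ≤ a) (hb : b ≤ b') : (a ⇨ b) ≤ a' ⇨ b' :=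
  resid.mp (((mul_le_mul_right'' ha _).trans (mul_himp_le' a b)).trans hb)

lemma himp_trans' {a b c : B} : (a ⇨ b) * (b ⇨ c) ≤ a ⇨ c := by
  apply resid.mp
  calc a * ((a ⇨ b) * (b ⇨ c)) = (a * (a ⇨ b)) * (b ⇨ c) := by rw [mul_assoc]
    _ ≤ b * (b ⇨ c) := mul_le_mul_right'' (mul_himp_le' a b) _
    _ ≤ c := mul_himp_le' b c

lemma mul_sup' (a b c : B) : a * (b ⊔ c) = a * b ⊔ a * c := by
  apply le_antisymm
  · exact resid.mpr (sup_le (resid.mp le_sup_left) (resid.mp le_sup_right))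
  · exact sup_le (mul_le_mul_left'' a le_sup_left) (mul_le_mul_left'' a le_sup_right)

lemma sup_mul' (a b c : B) : (a ⊔ b) * c = a * c ⊔ b * c := by
  rw [mul_comm, mul_sup', mul_comm c a, mul_comm c b]

lemma mul_himp_eq (a b c : B) : (a * b) ⇨ c = b ⇨ (a ⇨ c) := by
  apply le_antisymm
  · apply resid.mp; apply resid.mp
    calc a * (b * ((a * b) ⇨ c)) = (a * b) * ((a * b) ⇨ c) := by rw [mul_assoc]
      _ ≤ c := mul_himp_le' _ _
  · apply resid.mp
    calc (a * b) * (b ⇨ (a ⇨ c)) = a * (b * (b ⇨ (a ⇨ c))) := by rw [mul_assoc]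
      _ ≤ a * (a ⇨ c) := mul_le_mul_left'' a (mul_himp_le' _ _)
      _ ≤ c := mul_himp_le' _ _

lemma pow_stab {k : ℕ} (hpot : ∀ y : B, y ^ (k + 1) = y ^ k) (a : B) :
    ∀ j, a ^ (k + j) = a ^ k := by
  intro j
  induction j with
  | zero => rfl
  | succ n ih => rw [← add_assoc, pow_succ, ih, ← pow_succ, hpot]

lemma sup_pow_le_add (a b : B) : ∀ m n, (a ⊔ b) ^ (m + n) ≤ a ^ m ⊔ b ^ n := by
  intro m
  induction m with
  | zero =>
    intro n
    simpa using (le_one' ((a ⊔ b) ^ n)).trans le_sup_left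
  | succ m ihm =>
    intro n
    induction n with
    | zero =>
      simpa using (le_one' ((a ⊔ b) ^ (m + 1))).trans le_sup_right
    | succ n ihn =>
      have h1 : (a ⊔ b) ^ (m + 1 + (n + 1)) = a * (a ⊔ b) ^ (m + (n + 1)) ⊔ b * (a ⊔ b) ^ (m + (n + 1)) := by
        rw [show m + 1 + (n + 1) = (m + (n + 1)) + 1 by omega, pow_succ', sup_mul']
      rw [h1]
      have hb2 : (a ⊔ b) ^ (m + (n + 1)) = (a ⊔ b) ^ (m + 1 + n) := by
        rw [show m + (n + 1) = m + 1 + n by omega]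
      apply sup_le
      · calc a * (a ⊔ b) ^ (m + (n + 1)) ≤ a * (a ^ m ⊔ b ^ (n + 1)) :=
              mul_le_mul_left'' a (ihm (n + 1))
          _ = a * a ^ m ⊔ a * b ^ (n + 1) := mul_sup' _ _ _
          _ ≤ a ^ (m + 1) ⊔ b ^ (n + 1) := by
              apply sup_le
              · exact le_sup_left.trans_eq' (by rw [pow_succ, mul_comm])
              · exact (mul_le_right' _ _).trans le_sup_right
      · calc b * (a ⊔ b) ^ (m + (n + 1)) = b * (a ⊔ b) ^ (m + 1 + n) := by rw [hb2]
          _ ≤ b * (a ^ (m + 1) ⊔ b ^ n) := mul_le_mul_left'' b ihn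
          _ = b * a ^ (m + 1) ⊔ b * b ^ n := mul_sup' _ _ _
          _ ≤ a ^ (m + 1) ⊔ b ^ (n + 1) := by
              apply sup_le
              · exact (mul_le_right' _ _).trans le_sup_left
              · exact le_sup_right.trans_eq' (by rw [pow_succ, mul_comm])

lemma sup_pow_le {k : ℕ} (hpot : ∀ y : B, y ^ (k + 1) = y ^ k) (a b : B) :
    (a ⊔ b) ^ k ≤ a ^ k ⊔ b ^ k := by
  have := pow_stab hpot (a ⊔ b) k
  rw [← this]
  exact sup_pow_le_add a b k k

/-! ### congruence compatibility lemmas -/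

lemma mul_compat {a b a' b' : B} : (a ⇨ a') * (b ⇨ b') ≤ (a * b) ⇨ (a' * b') := by
  apply resid.mp
  calc (a * b) * ((a ⇨ a') * (b ⇨ b')) = (a * (a ⇨ a')) * (b * (b ⇨ b')) := by ac_rfl
    _ ≤ a' * b' := mul_le_mul'' (mul_himp_le' _ _) (mul_himp_le' _ _)

lemma inf_compat {a b a' b' : B} : (a ⇨ a') * (b ⇨ b') ≤ (a ⊓ b) ⇨ (a' ⊓ b') := by
  apply resid.mp
  apply le_inf
  · calc (a ⊓ b) * ((a ⇨ a') * (b ⇨ b')) ≤ a * ((a ⇨ a') * (b ⇨ b')) :=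
        mul_le_mul_right'' inf_le_left _
      _ = (a * (a ⇨ a')) * (b ⇨ b') := by rw [mul_assoc]
      _ ≤ a' * (b ⇨ b') := mul_le_mul_right'' (mul_himp_le' _ _) _
      _ ≤ a' := mul_le_left' _ _
  · calc (a ⊓ b) * ((a ⇨ a') * (b ⇨ b')) ≤ b * ((a ⇨ a') * (b ⇨ b')) :=
        mul_le_mul_right'' inf_le_right _
      _ = (b * (b ⇨ b')) * (a ⇨ a') := by ac_rfl
      _ ≤ b' * (a ⇨ a') := mul_le_mul_right'' (mul_himp_le' _ _) _
      _ ≤ b' := mul_le_left' _ _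

lemma sup_compat {a b a' b' : B} : (a ⇨ a') * (b ⇨ b') ≤ (a ⊔ b) ⇨ (a' ⊔ b') := by
  apply resid.mp
  rw [sup_mul']
  apply sup_le
  · calc a * ((a ⇨ a') * (b ⇨ b')) = (a * (a ⇨ a')) * (b ⇨ b') := by ac_rfl
      _ ≤ a' * (b ⇨ b') := mul_le_mul_right'' (mul_himp_le' _ _) _
      _ ≤ a' := mul_le_left' _ _
      _ ≤ a' ⊔ b' := le_sup_left
  · calc b * ((a ⇨ a') * (b ⇨ b')) = (b * (b ⇨ b')) * (a ⇨ a') := by ac_rfl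
      _ ≤ b' * (a ⇨ a') := mul_le_mul_right'' (mul_himp_le' _ _) _
      _ ≤ b' := mul_le_left' _ _
      _ ≤ a' ⊔ b' := le_sup_right

lemma himp_compat {a b a' b' : B} : (a' ⇨ a) * (b ⇨ b') ≤ (a ⇨ b) ⇨ (a' ⇨ b') := by
  apply resid.mp; apply resid.mp
  calc a' * ((a ⇨ b) * ((a' ⇨ a) * (b ⇨ b'))) = ((a' * (a' ⇨ a)) * (a ⇨ b)) * (b ⇨ b') := by ac_rfl
    _ ≤ (a * (a ⇨ b)) * (b ⇨ b') :=
        mul_le_mul_right'' (mul_le_mul_right'' (mul_himp_le' _ _) _) _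
    _ ≤ b * (b ⇨ b') := mul_le_mul_right'' (mul_himp_le' _ _) _
    _ ≤ b' := mul_himp_le' _ _

lemma sup_himp_le {a b c : B} : (a ⇨ c) * (b ⇨ c) ≤ (a ⊔ b) ⇨ c := by
  apply resid.mp
  rw [sup_mul']
  apply sup_le
  · calc a * ((a ⇨ c) * (b ⇨ c)) = (a * (a ⇨ c)) * (b ⇨ c) := by ac_rfl
      _ ≤ c * (b ⇨ c) := mul_le_mul_right'' (mul_himp_le' _ _) _
      _ ≤ c := mul_le_left' _ _
  · calc b * ((a ⇨ c) * (b ⇨ c)) = (b * (b ⇨ c)) * (a ⇨ c) := by ac_rfl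
      _ ≤ c * (a ⇨ c) := mul_le_mul_right'' (mul_himp_le' _ _) _
      _ ≤ c := mul_le_left' _ _

lemma le_inf_himp {a b c : B} : (c ⇨ a) * (c ⇨ b) ≤ c ⇨ (a ⊓ b) := by
  apply resid.mp
  apply le_inf
  · calc c * ((c ⇨ a) * (c ⇨ b)) = (c * (c ⇨ a)) * (c ⇨ b) := by ac_rfl
      _ ≤ a * (c ⇨ b) := mul_le_mul_right'' (mul_himp_le' _ _) _
      _ ≤ a := mul_le_left' _ _
  · calc c * ((c ⇨ a) * (c ⇨ b)) = (c * (c ⇨ b)) * (c ⇨ a) := by ac_rfl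
      _ ≤ b * (c ⇨ a) := mul_le_mul_right'' (mul_himp_le' _ _) _
      _ ≤ b := mul_le_left' _ _


lemma pow_le_pow_left'' {a b : B} (h : a ≤ b) : ∀ n, a ^ n ≤ b ^ n := by
  intro n
  induction n with
  | zero => simp
  | succ n ih => rw [pow_succ, pow_succ]; exact mul_le_mul'' ih h

lemma pow_le_self'' {k : ℕ} (hk : 1 ≤ k) (a : B) : a ^ k ≤ a := by
  have h : a ^ k = a ^ (k - 1) * a := by rw [← pow_succ, Nat.sub_add_cancel hk]
  rw [h]; exact mul_le_right' _ _

section QuotientConstruction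

variable (F : Set B)

lemma mem_himp_of_le (hup : ∀ a ∈ F, ∀ b : B, a ≤ b → b ∈ F) (hone : (1 : B) ∈ F)
    {a b : B} (h : a ≤ b) : (a ⇨ b) ∈ F :=
  hup 1 hone _ (one_le_himp_iff.mpr h)

lemma mem_trans2 (hup : ∀ a ∈ F, ∀ b : B, a ≤ b → b ∈ F)
    (hmul : ∀ a ∈ F, ∀ b ∈ F, a * b ∈ F)
    {a b c : B} (h1 : (a ⇨ b) ∈ F) (h2 : (b ⇨ c) ∈ F) : (a ⇨ c) ∈ F :=
  hup _ (hmul _ h1 _ h2) _ himp_trans'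

variable (hup : ∀ a ∈ F, ∀ b : B, a ≤ b → b ∈ F)
  (hmul : ∀ a ∈ F, ∀ b ∈ F, a * b ∈ F)
  (hone : (1 : B) ∈ F)

/-- The congruence induced by the filter `F`. -/
def fs : Setoid B where
  r a b := (a ⇨ b) ∈ F ∧ (b ⇨ a) ∈ F
  iseqv := {
    refl := fun _ => ⟨mem_himp_of_le F hup hone le_rfl, mem_himp_of_le F hup hone le_rfl⟩
    symm := fun h => ⟨h.2, h.1⟩
    trans := fun h1 h2 => ⟨mem_trans2 F hup hmul h1.1 h2.1, mem_trans2 F hup hmul h2.2 h1.2⟩ }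

/-- The quotient CIRL structure. -/
def qCIRL : CIRL (Quotient (fs F hup hmul hone)) where
  mul := Quotient.map₂ (· * ·) (fun a a' h b b' h' =>
    ⟨hup _ (hmul _ h.1 _ h'.1) _ mul_compat, hup _ (hmul _ h.2 _ h'.2) _ mul_compat⟩)
  one := Quotient.mk _ 1
  mul_assoc := fun X Y Z => Quotient.inductionOn₃ X Y Z fun a b c =>
    congrArg (Quotient.mk _) (mul_assoc a b c)
  one_mul := fun X => Quotient.inductionOn X fun a => congrArg (Quotient.mk _) (one_mul a)
  mul_one := fun X => Quotient.inductionOn X fun a => congrArg (Quotient.mk _) (mul_one a)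
  mul_comm := fun X Y => Quotient.inductionOn₂ X Y fun a b =>
    congrArg (Quotient.mk _) (mul_comm a b)
  le := fun X Y => Quotient.liftOn₂ X Y (fun a b => (a ⇨ b) ∈ F)
    (fun a b a' b' ha hb => propext (Iff.intro
      (fun h => mem_trans2 F hup hmul (mem_trans2 F hup hmul ha.2 h) hb.1)
      (fun h => mem_trans2 F hup hmul (mem_trans2 F hup hmul ha.1 h) hb.2)))
  le_refl := fun X => Quotient.inductionOn X fun a =>
    mem_himp_of_le F hup hone (le_refl a)
  le_trans := fun X Y Z => Quotient.inductionOn₃ X Y Z fun a b c h1 h2 =>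
    mem_trans2 F hup hmul h1 h2
  le_antisymm := fun X Y => Quotient.inductionOn₂ X Y fun a b h1 h2 =>
    Quotient.sound ⟨h1, h2⟩
  lt := fun X Y => Quotient.liftOn₂ X Y (fun a b => (a ⇨ b) ∈ F)
      (fun a b a' b' ha hb => propext (Iff.intro
        (fun h => mem_trans2 F hup hmul (mem_trans2 F hup hmul ha.2 h) hb.1)
        (fun h => mem_trans2 F hup hmul (mem_trans2 F hup hmul ha.1 h) hb.2))) ∧
    ¬ Quotient.liftOn₂ Y X (fun a b => (a ⇨ b) ∈ F)
      (fun a b a' b' ha hb => propext (Iff.intro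
        (fun h => mem_trans2 F hup hmul (mem_trans2 F hup hmul ha.2 h) hb.1)
        (fun h => mem_trans2 F hup hmul (mem_trans2 F hup hmul ha.1 h) hb.2)))
  sup := Quotient.map₂ (· ⊔ ·) (fun a a' h b b' h' =>
    ⟨hup _ (hmul _ h.1 _ h'.1) _ sup_compat, hup _ (hmul _ h.2 _ h'.2) _ sup_compat⟩)
  le_sup_left := fun X Y => Quotient.inductionOn₂ X Y fun a b =>
    mem_himp_of_le F hup hone le_sup_left
  le_sup_right := fun X Y => Quotient.inductionOn₂ X Y fun a b =>
    mem_himp_of_le F hup hone le_sup_right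
  sup_le := fun X Y Z => Quotient.inductionOn₃ X Y Z fun a b c h1 h2 =>
    hup _ (hmul _ h1 _ h2) _ sup_himp_le
  inf := Quotient.map₂ (· ⊓ ·) (fun a a' h b b' h' =>
    ⟨hup _ (hmul _ h.1 _ h'.1) _ inf_compat, hup _ (hmul _ h.2 _ h'.2) _ inf_compat⟩)
  inf_le_left := fun X Y => Quotient.inductionOn₂ X Y fun a b =>
    mem_himp_of_le F hup hone inf_le_left
  inf_le_right := fun X Y => Quotient.inductionOn₂ X Y fun a b =>
    mem_himp_of_le F hup hone inf_le_right
  le_inf := fun X Y Z => Quotient.inductionOn₃ X Y Z fun a b c h1 h2 =>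
    hup _ (hmul _ h1 _ h2) _ le_inf_himp
  himp := Quotient.map₂ (· ⇨ ·) (fun a a' h b b' h' =>
    ⟨hup _ (hmul _ h.2 _ h'.1) _ himp_compat, hup _ (hmul _ h.1 _ h'.2) _ himp_compat⟩)
  residuation := fun X Y Z => Quotient.inductionOn₃ X Y Z fun a b c => by
    show ((a * b) ⇨ c) ∈ F ↔ (b ⇨ (a ⇨ c)) ∈ F
    rw [mul_himp_eq]
  le_one := fun X => Quotient.inductionOn X fun a =>
    mem_himp_of_le F hup hone (le_one' a)

end QuotientConstruction

end CIRLthm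
open CIRLthm

attribute [-instance] Quotient.instLE_mathlib Quotient.instPreorder

theorem stmt13 {B : Type u} [CIRL B] (k : ℕ) (hk : 1 ≤ k)
    (hpot : ∀ x : B, x ^ (k + 1) = x ^ k) (g x : B) (hgx : ¬ g ^ k ≤ x) :
    ∃ (C : Type u) (inst : CIRL C),
      letI := inst
      (∀ y : C, y ^ (k + 1) = y ^ k) ∧
      (∃ s : C, s ≠ 1 ∧ ∀ y : C, y ≠ 1 → y ≤ s) ∧
      ∃ q : B → C, Function.Surjective q ∧
        (∀ a b : B, q (a * b) = q a * q b) ∧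
        (∀ a b : B, q (a ⊓ b) = q a ⊓ q b) ∧
        (∀ a b : B, q (a ⊔ b) = q a ⊔ q b) ∧
        (∀ a b : B, q (a ⇨ b) = q a ⇨ q b) ∧
        q 1 = 1 ∧ q g = 1 ∧ q x ≠ 1 := by
  classical
  -- the family of filters containing the principal filter of `g` and avoiding `x`
  set F₀ : Set B := {y | g ^ k ≤ y} with hF₀def
  set S : Set (Set B) :=
    {G | (∀ a ∈ G, ∀ b : B, a ≤ b → b ∈ G) ∧ (∀ a ∈ G, ∀ b ∈ G, a * b ∈ G) ∧
      F₀ ⊆ G ∧ x ∉ G} with hSdef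
  have hF₀S : F₀ ∈ S := by
    refine ⟨fun a ha b hab => ha.trans hab, fun a ha b hb => ?_, le_refl _, hgx⟩
    have h1 : g ^ (k + k) ≤ a * b := by
      rw [pow_add]; exact mul_le_mul'' ha hb
    have h2 : g ^ (k + k) = g ^ k := pow_stab hpot g k
    exact (h2 ▸ h1 : g ^ k ≤ a * b)
  obtain ⟨F, hF₀F, hFmax⟩ := zorn_subset_nonempty S (fun c hcS hc hcne => by
    obtain ⟨G₀, hG₀⟩ := hcne
    refine ⟨⋃₀ c, ⟨?_, ?_, ?_, ?_⟩, fun s hs => Set.subset_sUnion_of_mem hs⟩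
    · rintro a ⟨G, hG, haG⟩ b hab
      exact ⟨G, hG, (hcS hG).1 a haG b hab⟩
    · rintro a ⟨G, hG, haG⟩ b ⟨G', hG', hbG'⟩
      rcases hc.total hG hG' with h | h
      · exact ⟨G', hG', (hcS hG').2.1 a (h haG) b hbG'⟩
      · exact ⟨G, hG, (hcS hG).2.1 a haG b (h hbG')⟩
    · exact (hcS hG₀).2.2.1.trans (Set.subset_sUnion_of_mem hG₀)
    · rintro ⟨G, hG, hxG⟩
      exact (hcS hG).2.2.2 hxG) F₀ hF₀S
  obtain ⟨hup, hmul, hF₀sub, hxF⟩ := hFmax.1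
  have hone : (1 : B) ∈ F := hF₀sub (le_one' (g ^ k))
  letI instC : CIRL (Quotient (fs F hup hmul hone)) := qCIRL F hup hmul hone
  let q : B → Quotient (fs F hup hmul hone) := Quotient.mk (fs F hup hmul hone)
  have hq_mul : ∀ a b : B, q (a * b) = q a * q b := fun _ _ => rfl
  have hq_inf : ∀ a b : B, q (a ⊓ b) = q a ⊓ q b := fun _ _ => rfl
  have hq_sup : ∀ a b : B, q (a ⊔ b) = q a ⊔ q b := fun _ _ => rfl
  have hq_himp : ∀ a b : B, q (a ⇨ b) = q a ⇨ q b := fun _ _ => rfl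
  have hq_one : q 1 = 1 := rfl
  have hle : ∀ a b : B, (q a ≤ q b) ↔ (a ⇨ b) ∈ F := fun _ _ => Iff.rfl
  have hq_mono : ∀ {a b : B}, a ≤ b → q a ≤ q b := fun h =>
    (hle _ _).mpr (mem_himp_of_le F hup hone h)
  have heq1 : ∀ a : B, q a = 1 ↔ a ∈ F := by
    intro a
    constructor
    · intro h
      have h2 := Quotient.exact (show Quotient.mk (fs F hup hmul hone) a =
        Quotient.mk (fs F hup hmul hone) 1 from h)
      have h3 : (1 ⇨ a) ∈ F := h2.2
      exact hup _ h3 _ (by simpa using mul_himp_le' 1 a)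
    · intro ha
      refine Quotient.sound ⟨mem_himp_of_le F hup hone (le_one' a), ?_⟩
      exact hup a ha _ (resid.mp (le_of_eq (one_mul a)))
  have hq_pow : ∀ (a : B) (n : ℕ), q (a ^ n) = (q a) ^ n := by
    intro a n
    induction n with
    | zero => rw [pow_zero, pow_zero]; exact hq_one
    | succ n ih => rw [pow_succ, pow_succ, ← ih, hq_mul]
  have hq_surj : Function.Surjective q := fun Y => Quotient.inductionOn Y fun a => ⟨a, rfl⟩
  -- k-potency of the quotient
  have hpotC : ∀ Y : Quotient (fs F hup hmul hone), Y ^ (k + 1) = Y ^ k := by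
    intro Y
    refine Quotient.inductionOn Y fun a => ?_
    show (q a) ^ (k + 1) = (q a) ^ k
    rw [← hq_pow, ← hq_pow, hpot]
  have hc₀ne : q x ≠ 1 := fun h => hxF ((heq1 x).mp h)
  -- key property: every non-unit of the quotient to the k-th power lies below q x
  have hkey : ∀ Y : Quotient (fs F hup hmul hone), Y ≠ 1 → Y ^ k ≤ q x := by
    intro Y
    refine Quotient.inductionOn Y fun z hz => ?_
    have hzF : z ∉ F := fun h => hz ((heq1 z).mpr h)
    set G : Set B := {y | ∃ f ∈ F, f * z ^ k ≤ y} with hGdef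
    have hGup : ∀ a ∈ G, ∀ b : B, a ≤ b → b ∈ G := by
      rintro a ⟨f, hf, hfa⟩ b hab
      exact ⟨f, hf, hfa.trans hab⟩
    have hGmul : ∀ a ∈ G, ∀ b ∈ G, a * b ∈ G := by
      rintro a ⟨f, hf, hfa⟩ b ⟨f', hf', hfb⟩
      refine ⟨f * f', hmul _ hf _ hf', ?_⟩
      have h1 : (f * f') * z ^ (k + k) = (f * z ^ k) * (f' * z ^ k) := by
        rw [pow_add]; ac_rfl
      have h2 : (f * f') * z ^ k = (f * z ^ k) * (f' * z ^ k) := by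
        rw [← h1, pow_stab hpot z k]
      rw [h2]
      exact mul_le_mul'' hfa hfb
    have hGF₀ : F₀ ⊆ G := fun y hy => ⟨y, hF₀sub hy, mul_le_left' _ _⟩
    have hFG : F ⊆ G := fun f hf => ⟨f, hf, mul_le_left' _ _⟩
    have hzG : z ∈ G := ⟨1, hone, by simpa using pow_le_self'' hk z⟩
    have hxG : x ∈ G := by
      by_contra hxG
      have hGS : G ∈ S := ⟨hGup, hGmul, hGF₀, hxG⟩
      exact hzF (hFmax.2 hGS hFG hzG)
    obtain ⟨f, hf, hfx⟩ := hxG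
    have h1 : q (f * z ^ k) = (q z) ^ k := by
      rw [hq_mul, (heq1 f).mpr hf, one_mul, hq_pow]
    calc (q z) ^ k = q (f * z ^ k) := h1.symm
      _ ≤ q x := hq_mono hfx
  -- non-units are closed under join
  have hsupne : ∀ Y Z : Quotient (fs F hup hmul hone), Y ≠ 1 → Z ≠ 1 → Y ⊔ Z ≠ 1 := by
    intro Y Z hY hZ h1
    have h2 : (1 : Quotient (fs F hup hmul hone)) ≤ q x := by
      calc (1 : Quotient (fs F hup hmul hone)) = (Y ⊔ Z) ^ k := by rw [h1, one_pow]
        _ ≤ Y ^ k ⊔ Z ^ k := sup_pow_le hpotC Y Z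
        _ ≤ q x := sup_le (hkey Y hY) (hkey Z hZ)
    exact hc₀ne (le_antisymm (le_one' (q x)) h2)
  -- find the minimal exponent
  have hex : ∃ j : ℕ, ∀ Y : Quotient (fs F hup hmul hone), Y ≠ 1 → Y ^ (j + 1) ≤ q x := by
    refine ⟨k - 1, fun Y hY => ?_⟩
    rw [Nat.sub_add_cancel hk]
    exact hkey Y hY
  have hj₀spec : ∀ Y : Quotient (fs F hup hmul hone), Y ≠ 1 → Y ^ (Nat.find hex + 1) ≤ q x :=
    Nat.find_spec hex
  have hsecond : ∃ s : Quotient (fs F hup hmul hone), s ≠ 1 ∧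
      ∀ y : Quotient (fs F hup hmul hone), y ≠ 1 → y ≤ s := by
    by_cases hj : Nat.find hex = 0
    · refine ⟨q x, hc₀ne, fun Y hY => ?_⟩
      have h3 := hj₀spec Y hY
      rwa [hj, zero_add, pow_one] at h3
    · have hmin : ¬ ∀ Y : Quotient (fs F hup hmul hone), Y ≠ 1 →
          Y ^ ((Nat.find hex - 1) + 1) ≤ q x :=
        Nat.find_min hex (by omega)
      push_neg at hmin
      obtain ⟨w, hw1, hw2⟩ := hmin
      rw [Nat.sub_add_cancel (by omega : 1 ≤ Nat.find hex)] at hw2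
      refine ⟨w ^ (Nat.find hex) ⇨ q x, ?_, ?_⟩
      · intro h
        apply hw2
        have h1 : (1 : Quotient (fs F hup hmul hone)) ≤ w ^ (Nat.find hex) ⇨ q x :=
          le_of_eq h.symm
        have h2 : w ^ (Nat.find hex) * 1 ≤ q x := resid.mpr h1
        rwa [mul_one] at h2
      · intro Y hY
        apply resid.mp
        have hne : w ⊔ Y ≠ 1 := hsupne w Y hw1 hY
        calc w ^ (Nat.find hex) * Y ≤ (w ⊔ Y) ^ (Nat.find hex) * (w ⊔ Y) :=
              mul_le_mul'' (pow_le_pow_left'' le_sup_left _) le_sup_right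
          _ = (w ⊔ Y) ^ (Nat.find hex + 1) := (pow_succ _ _).symm
          _ ≤ q x := hj₀spec _ hne
  exact ⟨Quotient (fs F hup hmul hone), instC, hpotC, hsecond, q, hq_surj, hq_mul, hq_inf,
    hq_sup, hq_himp, hq_one, (heq1 g).mpr (hF₀sub (pow_le_self'' hk g)), hc₀ne⟩
end

section
/- Let X be a type equipped with a reflexive and transitive relation ≼, a predicate Fin : X → Prop, and a function c : X → ℕ such that for all A, B ∈ X: if Fin B, A ≼ B and ¬(B ≼ A), then Fin A and c(A) < c(B). Let K ⊆ K' be subsets of X. Then the following are equivalent: (1) there exists a set S ⊆ K' with Fin A for every A ∈ S such that K = {B ∈ K' : for all A ∈ S, ¬(A ≼ B)}; (2) both (a) for all A, B ∈ K', if A ≼ B and B ∈ K then A ∈ K, and (b) for every B ∈ K' \ K there exists A ∈ K' \ K with Fin A and A ≼ B. -/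
theorem stmt14 {X : Type*} (r : X → X → Prop)
    (hrefl : ∀ a : X, r a a) (htrans : ∀ a b c : X, r a b → r b c → r a c)
    (fin : X → Prop) (c : X → ℕ)
    (hord : ∀ A B : X, fin B → r A B → ¬ r B A → fin A ∧ c A < c B)
    (K K' : Set X) (hKK' : K ⊆ K') :
    (∃ S : Set X, S ⊆ K' ∧ (∀ A ∈ S, fin A) ∧
        K = {B ∈ K' | ∀ A ∈ S, ¬ r A B}) ↔
      ((∀ A ∈ K', ∀ B ∈ K', r A B → B ∈ K → A ∈ K) ∧
        (∀ B ∈ K' \ K, ∃ A ∈ K' \ K, fin A ∧ r A B)) := by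
  constructor
  · rintro ⟨S, hSK', hSfin, hK⟩
    constructor
    · intro A hA B hB hrAB hBK
      rw [hK] at hBK ⊢
      exact ⟨hA, fun A0 hA0 hr => hBK.2 A0 hA0 (htrans A0 A B hr hrAB)⟩
    · intro B hB
      obtain ⟨hBK', hnB⟩ := hB
      rw [hK] at hnB
      simp only [Set.mem_setOf_eq, not_and, not_forall, not_not] at hnB
      obtain ⟨A0, hA0S, hr⟩ := hnB hBK'
      refine ⟨A0, ⟨hSK' hA0S, ?_⟩, hSfin A0 hA0S, hr⟩
      intro hA0K
      rw [hK] at hA0K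
      exact hA0K.2 A0 hA0S (hrefl A0)
  · rintro ⟨ha, hb⟩
    refine ⟨{A | A ∈ K' \ K ∧ fin A}, fun A hA => hA.1.1, fun A hA => hA.2, ?_⟩
    ext B
    constructor
    · intro hBK
      refine ⟨hKK' hBK, fun A hA hr => hA.1.2 (ha A hA.1.1 B (hKK' hBK) hr hBK)⟩
    · rintro ⟨hBK', hB⟩
      by_contra hBK
      obtain ⟨A, hA, hfin, hr⟩ := hb B ⟨hBK', hBK⟩
      exact hB A ⟨hA, hfin⟩ hr
end

section
/- Let k ≥ 1 and let A be a k-potent commutative integral residuated lattice. Then there is a k-potent commutative integral residuated lattice structure on WithBot A (the type A with a new element ⊥ adjoined) such that: ⊥ is the least element; the canonical inclusion A → WithBot A preserves ·, ∧, ∨, →, and 1; and ⊥·x = ⊥ for all x. -/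
namespace CIRLBot

variable {A : Type*} [CIRL A]

def bmul (x y : WithBot A) : WithBot A := x.bind fun a => y.map fun b => a * b

def bhimp : WithBot A → WithBot A → WithBot A
  | none, _ => ((1 : A) : WithBot A)
  | some _, none => none
  | some a, some b => some (a ⇨ b)

lemma bmul_assoc (x y z : WithBot A) : bmul (bmul x y) z = bmul x (bmul y z) := by
  cases x <;> cases y <;> cases z <;>
    first
    | rfl
    | · show ((_ * _ * _ : A) : WithBot A) = ((_ * (_ * _) : A) : WithBot A)
        rw [mul_assoc]

lemma bmul_comm (x y : WithBot A) : bmul x y = bmul y x := by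
  cases x <;> cases y <;>
    first
    | rfl
    | · show ((_ * _ : A) : WithBot A) = ((_ * _ : A) : WithBot A)
        rw [mul_comm]

lemma bone_mul (x : WithBot A) : bmul ((1 : A) : WithBot A) x = x := by
  cases x with
  | bot => rfl
  | coe a => show ((1 * a : A) : WithBot A) = a; rw [one_mul]

lemma bmul_one (x : WithBot A) : bmul x ((1 : A) : WithBot A) = x := by
  rw [bmul_comm]; exact bone_mul x

lemma bres (x y z : WithBot A) : bmul x y ≤ z ↔ y ≤ bhimp x z := by
  cases x with
  | bot =>
    simp only [bmul, bhimp, Option.bind]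
    constructor
    · intro _
      cases y with
      | bot => exact bot_le
      | coe b => exact WithBot.coe_le_coe.mpr (CIRL.le_one b)
    · intro _; exact bot_le
  | coe a =>
    cases y with
    | bot =>
      constructor
      · intro _; exact bot_le
      · intro _; exact bot_le
    | coe b =>
      cases z with
      | bot =>
        show ((a * b : A) : WithBot A) ≤ ⊥ ↔ ((b : A) : WithBot A) ≤ ⊥
        simp [WithBot.not_coe_le_bot]
      | coe c =>
        show ((a * b : A) : WithBot A) ≤ (c : WithBot A) ↔
          ((b : A) : WithBot A) ≤ ((a ⇨ c : A) : WithBot A)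
        rw [WithBot.coe_le_coe, WithBot.coe_le_coe]
        exact CIRL.residuation a b c

lemma ble_one (x : WithBot A) : x ≤ ((1 : A) : WithBot A) := by
  cases x with
  | bot => exact bot_le
  | coe a => exact WithBot.coe_le_coe.mpr (CIRL.le_one a)

def inst : CIRL (WithBot A) :=
  { (inferInstance : Lattice (WithBot A)) with
    mul := bmul
    one := ((1 : A) : WithBot A)
    mul_assoc := bmul_assoc
    one_mul := bone_mul
    mul_one := bmul_one
    mul_comm := bmul_comm
    himp := bhimp
    residuation := bres
    le_one := ble_one }

end CIRLBot

theorem stmt15 {A : Type*} [CIRL A] (k : ℕ) (hk : 1 ≤ k)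
    (hpot : ∀ x : A, x ^ (k + 1) = x ^ k) :
    ∃ inst : CIRL (WithBot A),
      letI := inst
      (∀ x : WithBot A, x ^ (k + 1) = x ^ k) ∧
      (∀ x : WithBot A, (⊥ : WithBot A) ≤ x) ∧
      (∀ a b : A, ((a * b : A) : WithBot A) = (a : WithBot A) * (b : WithBot A)) ∧
      (∀ a b : A, ((a ⊓ b : A) : WithBot A) = (a : WithBot A) ⊓ (b : WithBot A)) ∧
      (∀ a b : A, ((a ⊔ b : A) : WithBot A) = (a : WithBot A) ⊔ (b : WithBot A)) ∧
      (∀ a b : A, ((a ⇨ b : A) : WithBot A) = (a : WithBot A) ⇨ (b : WithBot A)) ∧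
      (((1 : A) : WithBot A) = 1) ∧
      (∀ x : WithBot A, (⊥ : WithBot A) * x = ⊥) := by
  refine ⟨CIRLBot.inst, ?_, fun x => bot_le, fun a b => rfl, fun a b => (WithBot.coe_inf a b),
    fun a b => (WithBot.coe_sup a b), fun a b => rfl, rfl, fun x => rfl⟩
  letI := (CIRLBot.inst : CIRL (WithBot A))
  have coe_pow : ∀ (a : A) (n : ℕ), ((a : WithBot A)) ^ n = ((a ^ n : A) : WithBot A) := by
    intro a n
    induction n with
    | zero => rw [pow_zero, pow_zero]; rfl
    | succ n ih => rw [pow_succ, pow_succ, ih]; rfl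
  have bot_pow : ∀ n : ℕ, ((⊥ : WithBot A)) ^ (n + 1) = ⊥ := by
    intro n
    induction n with
    | zero => rw [pow_one]
    | succ n ih => rw [pow_succ, ih]; rfl
  intro x
  cases x with
  | bot =>
    obtain ⟨m, rfl⟩ : ∃ m, k = m + 1 := ⟨k - 1, by omega⟩
    show ((⊥ : WithBot A)) ^ (m + 1 + 1) = (⊥ : WithBot A) ^ (m + 1)
    rw [bot_pow, bot_pow]
  | coe a =>
    show ((a : WithBot A)) ^ (k + 1) = ((a : WithBot A)) ^ k
    rw [coe_pow, coe_pow, hpot]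
end

section
/- Let k ≥ 1, let A be a finite totally ordered k-potent commutative integral residuated lattice, and let h be a natural number with h ≥ |A|. Then there exist a totally ordered k-potent commutative integral residuated lattice B with exactly h elements and an injective map A → B preserving ·, ∧, ∨, →, and 1. -/
universe u

namespace Stmt17Aux

variable {A : Type u} [CIRL A]

lemma cirl_mul_le_mul_left {x y : A} (h : x ≤ y) (z : A) : z * x ≤ z * y := by
  rw [CIRL.residuation]
  exact le_trans h ((CIRL.residuation z y (z * y)).mp le_rfl)

lemma cirl_mul_le_left (x y : A) : x * y ≤ x := by
  have := cirl_mul_le_mul_left (CIRL.le_one y) x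
  rwa [mul_one] at this

lemma cirl_mul_le_right (x y : A) : x * y ≤ y := by
  rw [mul_comm]; exact cirl_mul_le_left y x

lemma cirl_mul_himp_le (x y : A) : x * (x ⇨ y) ≤ y :=
  (CIRL.residuation x (x ⇨ y) y).mpr le_rfl

/-- The extension of `A` by `m` new elements below everything. -/
inductive BExt (A : Type u) (m : ℕ) : Type u
  | inl : Fin m → BExt A m
  | inr : A → BExt A m

variable {m : ℕ}

/-- `BExt A m` is equivalent to `Fin m ⊕ A`. -/
def bequiv : BExt A m ≃ (Fin m ⊕ A) where
  toFun x := match x with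
    | .inl i => Sum.inl i
    | .inr a => Sum.inr a
  invFun x := match x with
    | .inl i => BExt.inl i
    | .inr a => BExt.inr a
  left_inv x := by cases x <;> rfl
  right_inv x := by cases x <;> rfl

noncomputable instance [Fintype A] : Fintype (BExt A m) :=
  Fintype.ofEquiv _ (bequiv (A := A) (m := m)).symm

instance : LE (BExt A m) :=
  ⟨fun x y =>
    match x, y with
    | .inl i, .inl j => i ≤ j
    | .inl _, .inr _ => True
    | .inr _, .inl _ => False
    | .inr a, .inr b => a ≤ b⟩

@[simp] lemma inl_le_inl {i j : Fin m} :
    (BExt.inl i : BExt A m) ≤ BExt.inl j ↔ i ≤ j := Iff.rfl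
@[simp] lemma inl_le_inr {i : Fin m} {a : A} :
    (BExt.inl i : BExt A m) ≤ BExt.inr a := trivial
@[simp] lemma not_inr_le_inl {i : Fin m} {a : A} :
    ¬ (BExt.inr a : BExt A m) ≤ BExt.inl i := fun h => h
@[simp] lemma inr_le_inr {a b : A} :
    (BExt.inr a : BExt A m) ≤ BExt.inr b ↔ a ≤ b := Iff.rfl

instance : Lattice (BExt A m) where
  le := (· ≤ ·)
  le_refl x := by cases x <;> simp
  le_trans x y z hxy hyz := by
    cases x <;> cases y <;> cases z <;> simp_all <;> exact le_trans hxy hyz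
  le_antisymm x y hxy hyx := by
    cases x <;> cases y <;> simp_all
    · exact le_antisymm hxy hyx
    · exact le_antisymm hxy hyx
  inf x y :=
    match x, y with
    | .inl i, .inl j => .inl (min i j)
    | .inl i, .inr _ => .inl i
    | .inr _, .inl j => .inl j
    | .inr a, .inr b => .inr (a ⊓ b)
  sup x y :=
    match x, y with
    | .inl i, .inl j => .inl (max i j)
    | .inl _, .inr b => .inr b
    | .inr a, .inl _ => .inr a
    | .inr a, .inr b => .inr (a ⊔ b)
  inf_le_left x y := by cases x <;> cases y <;> simp [min_le_left, inf_le_left]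
  inf_le_right x y := by cases x <;> cases y <;> simp [min_le_right, inf_le_right]
  le_inf x y z hxy hxz := by
    cases x <;> cases y <;> cases z <;> simp_all [le_min_iff, le_inf_iff]
  le_sup_left x y := by cases x <;> cases y <;> simp [le_max_left, le_sup_left]
  le_sup_right x y := by cases x <;> cases y <;> simp [le_max_right, le_sup_right]
  sup_le x y z hxz hyz := by
    cases x <;> cases y <;> cases z <;> simp_all [max_le_iff, sup_le_iff]

@[simp] lemma inr_inf_inr (a b : A) :
    (BExt.inr a : BExt A m) ⊓ BExt.inr b = BExt.inr (a ⊓ b) := rfl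
@[simp] lemma inr_sup_inr (a b : A) :
    (BExt.inr a : BExt A m) ⊔ BExt.inr b = BExt.inr (a ⊔ b) := rfl

/-- Multiplication on the extension. -/
def bmul : BExt A m → BExt A m → BExt A m
  | .inl i, .inl j => .inl (min i j)
  | .inl i, .inr _ => .inl i
  | .inr _, .inl j => .inl j
  | .inr a, .inr b => .inr (a * b)

instance : Mul (BExt A m) := ⟨bmul⟩
instance : One (BExt A m) := ⟨.inr 1⟩

lemma mul_def (x y : BExt A m) : x * y = bmul x y := rfl

instance : CommMonoid (BExt A m) where
  mul_assoc x y z := by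
    cases x <;> cases y <;> cases z <;>
      simp [mul_def, bmul, min_assoc, mul_assoc]
  one_mul x := by
    cases x <;> simp [mul_def, bmul]
  mul_one x := by
    cases x <;> simp [mul_def, bmul]
  mul_comm x y := by
    cases x <;> cases y <;> simp [mul_def, bmul, min_comm, mul_comm]

@[simp] lemma inr_mul_inr (a b : A) :
    (BExt.inr a : BExt A m) * BExt.inr b = BExt.inr (a * b) := rfl
@[simp] lemma inr_mul_inl (a : A) (i : Fin m) :
    (BExt.inr a : BExt A m) * BExt.inl i = BExt.inl i := rfl
@[simp] lemma inl_mul_inr (a : A) (i : Fin m) :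
    (BExt.inl i : BExt A m) * BExt.inr a = BExt.inl i := rfl
@[simp] lemma inl_mul_inl (i j : Fin m) :
    (BExt.inl i : BExt A m) * BExt.inl j = BExt.inl (min i j) := rfl
@[simp] lemma one_def : (1 : BExt A m) = BExt.inr 1 := rfl

lemma bmul_le_mul_left {x y : BExt A m} (h : x ≤ y) (z : BExt A m) :
    z * x ≤ z * y := by
  cases z with
  | inl i =>
    cases x with
    | inl p =>
      cases y with
      | inl q =>
        rw [inl_mul_inl, inl_mul_inl]
        exact inl_le_inl.mpr (min_le_min le_rfl (inl_le_inl.mp h))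
      | inr a =>
        rw [inl_mul_inl, inl_mul_inr]
        exact inl_le_inl.mpr (min_le_left i p)
    | inr a =>
      cases y with
      | inl q => exact absurd h not_inr_le_inl
      | inr b => rw [inl_mul_inr, inl_mul_inr]
  | inr c =>
    cases x with
    | inl p =>
      cases y with
      | inl q =>
        rw [inr_mul_inl, inr_mul_inl]
        exact h
      | inr a =>
        rw [inr_mul_inl, inr_mul_inr]
        exact inl_le_inr
    | inr a =>
      cases y with
      | inl q => exact absurd h not_inr_le_inl
      | inr b =>
        rw [inr_mul_inr, inr_mul_inr]
        exact inr_le_inr.mpr (cirl_mul_le_mul_left (inr_le_inr.mp h) c)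

lemma b_le_one (x : BExt A m) : x ≤ 1 := by
  cases x
  · simp
  · simpa using CIRL.le_one _

lemma btot (htot : ∀ x y : A, x ≤ y ∨ y ≤ x) (x y : BExt A m) :
    x ≤ y ∨ y ≤ x := by
  cases x <;> cases y <;> simp [le_total, htot]

open Classical in
/-- The residual on `BExt A m`. -/
noncomputable instance [Fintype A] : HImp (BExt A m) :=
  ⟨fun x z =>
    if hne : (Finset.univ.filter (fun y : BExt A m => x * y ≤ z)).Nonempty then
      (Finset.univ.filter (fun y : BExt A m => x * y ≤ z)).sup' hne id
    else z⟩

lemma himp_spec [Fintype A] (hm : 0 < m) (htot : ∀ x y : A, x ≤ y ∨ y ≤ x)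
    (x z : BExt A m) : ∀ y : BExt A m, x * y ≤ z ↔ y ≤ x ⇨ z := by
  classical
  have hbot : ∀ w : BExt A m, (BExt.inl ⟨0, hm⟩ : BExt A m) ≤ w := by
    intro w; cases w
    · exact inl_le_inl.mpr (Nat.zero_le _)
    · exact inl_le_inr
  have hmem : x * (BExt.inl ⟨0, hm⟩ : BExt A m) ≤ z := by
    cases x
    · exact le_trans (by simp [min_le_right]) (hbot z)
    · simpa using hbot z
  set S := Finset.univ.filter (fun y : BExt A m => x * y ≤ z) with hS
  have hne : S.Nonempty := ⟨BExt.inl ⟨0, hm⟩, by simp [hS, hmem]⟩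
  have himp_eq : x ⇨ z = S.sup' hne id := by
    show dite _ _ _ = _
    rw [dif_pos hne]
  have hsup_mem : x * (S.sup' hne id) ≤ z := by
    have := Finset.sup'_mem (s := {w : BExt A m | x * w ≤ z})
      (fun w1 h1 w2 h2 => by
        rcases btot htot w1 w2 with hle | hle
        · rwa [sup_eq_right.mpr hle]
        · rwa [sup_eq_left.mpr hle]) S hne id
      (fun i hi => by simpa [hS] using (Finset.mem_filter.mp hi).2)
    exact this
  intro y
  constructor
  · intro hxy
    rw [himp_eq]
    exact Finset.le_sup' id (by simp [hS, hxy])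
  · intro hy
    rw [himp_eq] at hy
    exact le_trans (bmul_le_mul_left hy x) hsup_mem

/-- The CIRL structure on the extension, for `0 < m`. -/
noncomputable def bCIRL [Fintype A] (hm : 0 < m)
    (htot : ∀ x y : A, x ≤ y ∨ y ≤ x) : CIRL (BExt A m) :=
  { (inferInstance : CommMonoid (BExt A m)),
    (inferInstance : Lattice (BExt A m)),
    (inferInstance : HImp (BExt A m)) with
    residuation := fun x y z => himp_spec hm htot x z y
    le_one := b_le_one }

lemma inr_pow (a : A) (n : ℕ) :
    (BExt.inr a : BExt A m) ^ n = BExt.inr (a ^ n) := by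
  induction n with
  | zero => simp
  | succ n ih => rw [pow_succ, pow_succ, ih, inr_mul_inr]

lemma inl_pow (i : Fin m) (n : ℕ) (hn : 1 ≤ n) :
    (BExt.inl i : BExt A m) ^ n = BExt.inl i := by
  induction n with
  | zero => omega
  | succ n ih =>
    rcases Nat.eq_or_lt_of_le hn with h1 | h1
    · simp [← h1]
    · rw [pow_succ, ih (by omega), inl_mul_inl, min_self]

end Stmt17Aux

theorem stmt17 {A : Type u} [CIRL A] [Fintype A] (k : ℕ) (hk : 1 ≤ k)
    (hpot : ∀ x : A, x ^ (k + 1) = x ^ k)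
    (htot : ∀ x y : A, x ≤ y ∨ y ≤ x)
    (h : ℕ) (hh : Fintype.card A ≤ h) :
    ∃ (B : Type u) (inst : CIRL B),
      letI := inst
      (∀ x : B, x ^ (k + 1) = x ^ k) ∧
      (∀ x y : B, x ≤ y ∨ y ≤ x) ∧
      Nat.card B = h ∧
      ∃ f : A → B, Function.Injective f ∧
        (∀ a b : A, f (a * b) = f a * f b) ∧
        (∀ a b : A, f (a ⊓ b) = f a ⊓ f b) ∧
        (∀ a b : A, f (a ⊔ b) = f a ⊔ f b) ∧
        (∀ a b : A, f (a ⇨ b) = f a ⇨ f b) ∧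
        f 1 = 1 := by
  open Stmt17Aux in
  classical
  rcases Nat.eq_or_lt_of_le hh with heq | hlt
  · -- `h = Fintype.card A`: take `B = A` and the identity map.
    refine ⟨A, inferInstance, hpot, htot, ?_, id, Function.injective_id,
      fun _ _ => rfl, fun _ _ => rfl, fun _ _ => rfl, fun _ _ => rfl, rfl⟩
    rw [Nat.card_eq_fintype_card, heq]
  · -- Otherwise extend by `m = h - card A > 0` new elements below everything.
    set m := h - Fintype.card A with hm_def
    have hm : 0 < m := by omega
    refine ⟨BExt A m, bCIRL hm htot, ?_, ?_, ?_, ?_⟩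
    · intro x
      cases x with
      | inl i =>
        exact (inl_pow i (k + 1) (by omega)).trans (inl_pow i k hk).symm
      | inr a =>
        exact (inr_pow a (k + 1)).trans ((congrArg BExt.inr (hpot a)).trans (inr_pow a k).symm)
    · exact btot htot
    · have e : BExt A m ≃ Fin h :=
        (bequiv (A := A) (m := m)).trans
          ((Equiv.sumCongr (Equiv.refl (Fin m)) (Fintype.equivFin A)).trans
            (finSumFinEquiv.trans (finCongr (by omega : m + Fintype.card A = h))))
      exact Nat.card_eq_of_equiv_fin e
    · refine ⟨BExt.inr, fun a b hab => by injection hab, fun _ _ => rfl,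
        fun _ _ => rfl, fun _ _ => rfl, ?_, rfl⟩
      intro a b
      -- `inr (a ⇨ b)` is the residual of `inr a` and `inr b` in `BExt`.
      have hres := himp_spec (A := A) hm htot (BExt.inr a) (BExt.inr b)
      apply le_antisymm
      · exact (hres (BExt.inr (a ⇨ b))).mp (by simpa using cirl_mul_himp_le a b)
      · have hmem : BExt.inr a * (BExt.inr a ⇨ BExt.inr b) ≤ BExt.inr b :=
          (hres _).mpr le_rfl
        cases hcase : (BExt.inr a ⇨ BExt.inr b : BExt A m) with
        | inl i => exact (show (BExt.inr a ⇨ BExt.inr b : BExt A m) ≤ BExt.inr (a ⇨ b) by rw [hcase]; exact inl_le_inr)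
        | inr c =>
          rw [hcase] at hmem
          simp only [inr_mul_inr, inr_le_inr] at hmem ⊢
          exact (show (BExt.inr a ⇨ BExt.inr b : BExt A m) ≤ BExt.inr (a ⇨ b) by rw [hcase]; exact inr_le_inr.mpr ((CIRL.residuation a c b).mp hmem))
end
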